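/- Let V, f₁, f₂, c, Φ ∈ M_n(ℂ) be Hermitian with f₁ positive definite, f₂ positive semidefinite, −V positive semidefinite, and Φ negative semidefinite. Let λ₀ > 0 satisfy √λ₀ · √(λ_min(f₁)) > λ_max(c), where λ_min and λ_max denote the smallest and largest eigenvalues. Then the Hermitian matrix λ₀ f₁ + λ₀² f₂ − V is positive definite and √(λ₀ f₁ + λ₀² f₂ − V) − c − Φ is positive definite. -/

import Mathlib

open Matrix
open scoped ComplexOrder

noncomputable section

/-- `Matrix.PosSemidef.sqrt` was removed from Mathlib; restored here with its old definition. -/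
def Matrix.PosSemidef.sqrt {n : Type*} [Fintype n] [DecidableEq n] {𝕜 : Type*} [RCLike 𝕜]
    {A : Matrix n n 𝕜} (hA : A.PosSemidef) : Matrix n n 𝕜 :=
  hA.1.eigenvectorUnitary.1 * diagonal ((↑) ∘ (Real.sqrt ·) ∘ hA.1.eigenvalues) *
    (star hA.1.eigenvectorUnitary : Matrix n n 𝕜)

namespace BSAux

variable {n : ℕ}

lemma smul_posSemidef {A : Matrix (Fin n) (Fin n) ℂ} (hA : A.PosSemidef)
    {r : ℝ} (hr : 0 ≤ r) : ((r : ℂ) • A).PosSemidef := by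
  refine PosSemidef.of_dotProduct_mulVec_nonneg ?_ fun x => ?_
  · unfold Matrix.IsHermitian
    rw [conjTranspose_smul, hA.1, Complex.star_def, Complex.conj_ofReal]
  · rw [smul_mulVec, dotProduct_smul, smul_eq_mul]
    exact mul_nonneg (by exact_mod_cast hr) (hA.dotProduct_mulVec_nonneg x)

lemma smul_posDef {A : Matrix (Fin n) (Fin n) ℂ} (hA : A.PosDef)
    {r : ℝ} (hr : 0 < r) : ((r : ℂ) • A).PosDef := by
  refine PosDef.of_dotProduct_mulVec_pos ?_ fun x hx => ?_
  · unfold Matrix.IsHermitian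
    rw [conjTranspose_smul, hA.1, Complex.star_def, Complex.conj_ofReal]
  · rw [smul_mulVec, dotProduct_smul, smul_eq_mul]
    exact mul_pos (by exact_mod_cast hr) (hA.dotProduct_mulVec_pos hx)

lemma conj_diag_psd {A : Matrix (Fin n) (Fin n) ℂ} (hA : A.IsHermitian)
    (g : Fin n → ℝ) (hg : ∀ i, 0 ≤ g i) :
    ((hA.eigenvectorUnitary : Matrix (Fin n) (Fin n) ℂ) * diagonal (RCLike.ofReal ∘ g) *
      star (hA.eigenvectorUnitary : Matrix (Fin n) (Fin n) ℂ)).PosSemidef := by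
  rw [Matrix.star_eq_conjTranspose]
  refine (posSemidef_diagonal_iff.mpr ?_).mul_mul_conjTranspose_same _
  intro i
  simpa using hg i

lemma conj_const {A : Matrix (Fin n) (Fin n) ℂ} (hA : A.IsHermitian) (β : ℝ) :
    (hA.eigenvectorUnitary : Matrix (Fin n) (Fin n) ℂ) *
      diagonal (RCLike.ofReal ∘ (fun _ : Fin n => β)) *
      star (hA.eigenvectorUnitary : Matrix (Fin n) (Fin n) ℂ) = (β : ℂ) • 1 := by
  have h1 : diagonal (RCLike.ofReal ∘ (fun _ : Fin n => β) : Fin n → ℂ) =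
      (β : ℂ) • (1 : Matrix (Fin n) (Fin n) ℂ) := by
    ext i j
    rcases eq_or_ne i j with rfl | h
    · simp
    · simp [diagonal_apply_ne _ h, Matrix.one_apply_ne h]
  rw [h1, Matrix.mul_smul, Matrix.smul_mul, mul_one,
    (Matrix.mem_unitaryGroup_iff).mp hA.eigenvectorUnitary.2]

lemma conj_sub {A : Matrix (Fin n) (Fin n) ℂ} (hA : A.IsHermitian) (g g' : Fin n → ℝ) :
    (hA.eigenvectorUnitary : Matrix (Fin n) (Fin n) ℂ) * diagonal (RCLike.ofReal ∘ g) *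
      star (hA.eigenvectorUnitary : Matrix (Fin n) (Fin n) ℂ) -
    (hA.eigenvectorUnitary : Matrix (Fin n) (Fin n) ℂ) * diagonal (RCLike.ofReal ∘ g') *
      star (hA.eigenvectorUnitary : Matrix (Fin n) (Fin n) ℂ) =
    (hA.eigenvectorUnitary : Matrix (Fin n) (Fin n) ℂ) * diagonal (RCLike.ofReal ∘ (g - g')) *
      star (hA.eigenvectorUnitary : Matrix (Fin n) (Fin n) ℂ) := by
  have hfun : (fun i => (RCLike.ofReal ∘ g) i - ((RCLike.ofReal ∘ g') i : ℂ)) =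
      RCLike.ofReal ∘ (g - g') := by
    funext i; simp
  rw [← sub_mul, ← mul_sub, diagonal_sub, hfun]

lemma sub_smul_psd {A : Matrix (Fin n) (Fin n) ℂ} (hA : A.IsHermitian)
    (g : Fin n → ℝ) (β : ℝ) (h : ∀ i, β ≤ g i) :
    ((hA.eigenvectorUnitary : Matrix (Fin n) (Fin n) ℂ) * diagonal (RCLike.ofReal ∘ g) *
      star (hA.eigenvectorUnitary : Matrix (Fin n) (Fin n) ℂ) - (β : ℂ) • 1).PosSemidef := by
  rw [← conj_const hA β, conj_sub]
  exact conj_diag_psd hA _ fun i => sub_nonneg.mpr (h i)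

lemma smul_sub_psd {A : Matrix (Fin n) (Fin n) ℂ} (hA : A.IsHermitian)
    (g : Fin n → ℝ) (β : ℝ) (h : ∀ i, g i ≤ β) :
    ((β : ℂ) • 1 - (hA.eigenvectorUnitary : Matrix (Fin n) (Fin n) ℂ) * diagonal (RCLike.ofReal ∘ g) *
      star (hA.eigenvectorUnitary : Matrix (Fin n) (Fin n) ℂ)).PosSemidef := by
  rw [← conj_const hA β, conj_sub]
  exact conj_diag_psd hA _ fun i => sub_nonneg.mpr (h i)

/-- Lower shift: if all eigenvalues are ≥ β then A - β•1 is psd. -/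
lemma herm_sub_smul_psd {A : Matrix (Fin n) (Fin n) ℂ} (hA : A.IsHermitian)
    {β : ℝ} (h : ∀ i, β ≤ hA.eigenvalues i) : (A - (β : ℂ) • 1).PosSemidef := by
  have h2 := sub_smul_psd hA hA.eigenvalues β h
  have h3 := hA.spectral_theorem
  rw [Unitary.conjStarAlgAut_apply] at h3
  rwa [← h3] at h2

lemma herm_smul_sub_psd {A : Matrix (Fin n) (Fin n) ℂ} (hA : A.IsHermitian)
    {β : ℝ} (h : ∀ i, hA.eigenvalues i ≤ β) : ((β : ℂ) • 1 - A).PosSemidef := by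
  have h2 := smul_sub_psd hA hA.eigenvalues β h
  have h3 := hA.spectral_theorem
  rw [Unitary.conjStarAlgAut_apply] at h3
  rwa [← h3] at h2

/-- Converse: if A - β•1 is psd then all eigenvalues are ≥ β. -/
lemma eig_lower {A : Matrix (Fin n) (Fin n) ℂ} (hA : A.IsHermitian)
    {β : ℝ} (h : (A - (β : ℂ) • 1).PosSemidef) (i : Fin n) : β ≤ hA.eigenvalues i := by
  have hv := h.re_dotProduct_nonneg ⇑(hA.eigenvectorBasis i)
  have hvv : star ⇑(hA.eigenvectorBasis i) ⬝ᵥ ⇑(hA.eigenvectorBasis i) = (1 : ℂ) := by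
    have h1 : ‖hA.eigenvectorBasis i‖ = 1 := hA.eigenvectorBasis.orthonormal.1 i
    have h2 := inner_self_eq_norm_sq_to_K (𝕜 := ℂ) (hA.eigenvectorBasis i)
    rw [EuclideanSpace.inner_eq_star_dotProduct] at h2
    rw [dotProduct_comm]
    simpa [h1] using h2
  rw [sub_mulVec, smul_mulVec, one_mulVec, dotProduct_sub, dotProduct_smul,
    smul_eq_mul, hvv, mul_one, map_sub] at hv
  rw [hA.eigenvalues_eq i]
  simpa using hv

end BSAux

open BSAux

/-- for λ₀ > 0 with `√λ₀ √(λ_min(f₁)) > λ_max(c)`, the matrix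
`λ₀ f₁ + λ₀² f₂ − V` is positive definite and
`√(λ₀ f₁ + λ₀² f₂ − V) − c − Φ` is positive definite. -/
theorem bottom_shelf_matrix_posDef {n : ℕ} (hn : 0 < n)
    (V f₁ f₂ c Φ : Matrix (Fin n) (Fin n) ℂ)
    (hV : V.IsHermitian) (hf₁ : f₁.IsHermitian) (hf₂ : f₂.IsHermitian)
    (hc : c.IsHermitian) (hΦ : Φ.IsHermitian)
    (hf₁pos : f₁.PosDef) (hf₂pos : f₂.PosSemidef)
    (hVneg : (-V).PosSemidef) (hΦneg : (-Φ).PosSemidef)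
    (lam₀ : ℝ) (hlam₀ : 0 < lam₀)
    (hgap : Real.sqrt lam₀ * Real.sqrt (⨅ i, hf₁pos.1.eigenvalues i)
      > ⨆ i, hc.eigenvalues i) :
    ((lam₀ : ℂ) • f₁ + (lam₀ : ℂ) ^ 2 • f₂ - V).PosDef ∧
    ∀ hM : ((lam₀ : ℂ) • f₁ + (lam₀ : ℂ) ^ 2 • f₂ - V).PosSemidef,
      (hM.sqrt - c - Φ).PosDef := by
  have hne : Nonempty (Fin n) := ⟨⟨0, hn⟩⟩
  have hsq : ((lam₀ : ℂ)) ^ 2 = (((lam₀ ^ 2 : ℝ)) : ℂ) := by push_cast; ring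
  have h2 : (((lam₀ : ℂ)) ^ 2 • f₂).PosSemidef := by
    rw [hsq]; exact smul_posSemidef hf₂pos (by positivity)
  constructor
  · have h1 : (((lam₀ : ℂ)) • f₁).PosDef := smul_posDef hf₁pos hlam₀
    have hEq : (lam₀ : ℂ) • f₁ + (lam₀ : ℂ) ^ 2 • f₂ - V
        = (lam₀ : ℂ) • f₁ + ((lam₀ : ℂ) ^ 2 • f₂ + (-V)) := by module
    rw [hEq]
    exact h1.add_posSemidef (h2.add hVneg)
  · intro hM
    have hshift : ((lam₀ : ℂ) • f₁ + (lam₀ : ℂ) ^ 2 • f₂ - V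
        - (((lam₀ * ⨅ i, hf₁pos.1.eigenvalues i : ℝ)) : ℂ) • 1).PosSemidef := by
      have hf1shift : (f₁ - (((⨅ i, hf₁pos.1.eigenvalues i : ℝ)) : ℂ) • 1).PosSemidef :=
        herm_sub_smul_psd hf₁pos.1 fun i => ciInf_le (Finite.bddBelow_range _) i
      have h1 : (((lam₀ : ℂ)) • (f₁ - (((⨅ i, hf₁pos.1.eigenvalues i : ℝ)) : ℂ) • 1)).PosSemidef :=
        smul_posSemidef hf1shift hlam₀.le
      have hEq : (lam₀ : ℂ) • f₁ + (lam₀ : ℂ) ^ 2 • f₂ - V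
          - (((lam₀ * ⨅ i, hf₁pos.1.eigenvalues i : ℝ)) : ℂ) • 1
          = (lam₀ : ℂ) • (f₁ - (((⨅ i, hf₁pos.1.eigenvalues i : ℝ)) : ℂ) • 1)
            + ((lam₀ : ℂ) ^ 2 • f₂ + (-V)) := by
        push_cast
        module
      rw [hEq]
      exact h1.add (h2.add hVneg)
    have heig : ∀ i, lam₀ * ⨅ i, hf₁pos.1.eigenvalues i ≤ hM.1.eigenvalues i :=
      fun i => eig_lower hM.1 hshift i
    have hsqrtshift : (hM.sqrt
        - ((Real.sqrt (lam₀ * ⨅ i, hf₁pos.1.eigenvalues i) : ℝ) : ℂ) • 1).PosSemidef := by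
      unfold Matrix.PosSemidef.sqrt
      exact sub_smul_psd hM.1 _ _ fun i => Real.sqrt_le_sqrt (heig i)
    have hcupper : ((((⨆ i, hc.eigenvalues i : ℝ)) : ℂ) • 1 - c).PosSemidef :=
      herm_smul_sub_psd hc fun i => le_ciSup (Finite.bddAbove_range _) i
    have hst : (⨆ i, hc.eigenvalues i) < Real.sqrt (lam₀ * ⨅ i, hf₁pos.1.eigenvalues i) := by
      rw [Real.sqrt_mul hlam₀.le]
      exact hgap
    have hpos1 : ((((Real.sqrt (lam₀ * ⨅ i, hf₁pos.1.eigenvalues i)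
        - ⨆ i, hc.eigenvalues i : ℝ)) : ℂ) • (1 : Matrix (Fin n) (Fin n) ℂ)).PosDef :=
      smul_posDef Matrix.PosDef.one (by linarith)
    have hdecomp : hM.sqrt - c - Φ =
        (hM.sqrt - ((Real.sqrt (lam₀ * ⨅ i, hf₁pos.1.eigenvalues i) : ℝ) : ℂ) • 1)
        + ((((⨆ i, hc.eigenvalues i : ℝ)) : ℂ) • 1 - c) + (-Φ)
        + (((Real.sqrt (lam₀ * ⨅ i, hf₁pos.1.eigenvalues i)
            - ⨆ i, hc.eigenvalues i : ℝ)) : ℂ) • 1 := by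
      push_cast
      module
    rw [hdecomp]
    exact Matrix.PosDef.posSemidef_add ((hsqrtshift.add hcupper).add hΦneg) hpos1
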